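/- Let V ⊆ (ℂ∖{0})^m be open, let u : ℂ^m → ℂ be analytic on ι(V), where ι(X) = (1/X_1,…,1/X_m), and set v = u ∘ ι on V. Then for every i and every X ∈ V, applying the transformed operator p_i^A = X_i θ_{X_i}(−θ_{X_i} + c_i − 1) + (Σ_{j=1}^m θ_{X_j} − a)(θ_{X_i} − b_i) to v at X yields (p_i^A v)(X) = −X_i · (ℓ_i^A u)(ι(X)). That is, under the change of coordinates X_i = 1/x_i, the Lauricella F_A operator ℓ_i^A transforms (up to left multiplication by the unit −X_i) into p_i^A. -/

import Mathlib

/-- The Euler operator `θ_i` acting on functions `ℂ^m → ℂ`: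
`(θ_i f)(x) = x_i ⋅ (∂f/∂x_i)(x)`, where the partial derivative is the Fréchet
derivative evaluated at the `i`-th standard basis vector. -/
noncomputable def eulerOpFun {m : ℕ} (i : Fin m) (f : (Fin m → ℂ) → ℂ) :
    (Fin m → ℂ) → ℂ :=
  fun x => x i * fderiv ℂ f x (Pi.single i 1)

/-- The Lauricella `F_A` operator
`ℓ_i^A = θ_i(θ_i + c_i − 1) − x_i(θ_1 + ⋯ + θ_m + a)(θ_i + b_i)`
acting on functions `ℂ^m → ℂ`. -/
noncomputable def ellAFun {m : ℕ} (a : ℂ) (b c : Fin m → ℂ) (i : Fin m)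
    (u : (Fin m → ℂ) → ℂ) : (Fin m → ℂ) → ℂ :=
  eulerOpFun i (eulerOpFun i u + (c i - 1) • u) -
    fun x => x i *
      ((∑ j, eulerOpFun j (eulerOpFun i u + b i • u)) x +
        a * (eulerOpFun i u + b i • u) x)

/-- The transformed operator
`p_i^A = X_i θ_{X_i}(−θ_{X_i} + c_i − 1) + (Σ_j θ_{X_j} − a)(θ_{X_i} − b_i)`
acting on functions `ℂ^m → ℂ`. -/
noncomputable def pAFun {m : ℕ} (a : ℂ) (b c : Fin m → ℂ) (i : Fin m)
    (v : (Fin m → ℂ) → ℂ) : (Fin m → ℂ) → ℂ :=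
  (fun X => X i * eulerOpFun i ((c i - 1) • v - eulerOpFun i v) X) +
    ((∑ j, eulerOpFun j (eulerOpFun i v - b i • v)) -
      a • (eulerOpFun i v - b i • v))

/- Auxiliary lemmas -/

lemma hasFDerivAt_inv_pi {m : ℕ} (X : Fin m → ℂ) (hX : ∀ j, X j ≠ 0) :
    HasFDerivAt (fun Y : Fin m → ℂ => fun j => (Y j)⁻¹)
      (ContinuousLinearMap.pi fun j =>
        (-((X j) ^ 2)⁻¹) • (ContinuousLinearMap.proj j : (Fin m → ℂ) →L[ℂ] ℂ)) X := by
  apply hasFDerivAt_pi.2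
  intro j
  have h := (hasDerivAt_inv (hX j)).comp_hasFDerivAt X
    ((ContinuousLinearMap.proj j : (Fin m → ℂ) →L[ℂ] ℂ).hasFDerivAt)
  exact h

lemma eulerOpFun_congr {m : ℕ} (i : Fin m) {f g : (Fin m → ℂ) → ℂ} {x : Fin m → ℂ}
    (h : f =ᶠ[nhds x] g) : eulerOpFun i f x = eulerOpFun i g x := by
  unfold eulerOpFun
  rw [h.fderiv_eq]

lemma eulerOpFun_flip {m : ℕ} (i : Fin m) (u : (Fin m → ℂ) → ℂ) (X : Fin m → ℂ)
    (hX : ∀ j, X j ≠ 0) (hu : DifferentiableAt ℂ u (fun j => (X j)⁻¹)) :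
    eulerOpFun i (u ∘ fun Y : Fin m → ℂ => fun j => (Y j)⁻¹) X
      = - eulerOpFun i u (fun j => (X j)⁻¹) := by
  have hι := hasFDerivAt_inv_pi X hX
  have hcomp := hu.hasFDerivAt.comp X hι
  have hsingle : (ContinuousLinearMap.pi fun j =>
      (-((X j) ^ 2)⁻¹) • (ContinuousLinearMap.proj j : (Fin m → ℂ) →L[ℂ] ℂ))
      (Pi.single i 1) = (-((X i) ^ 2)⁻¹) • (Pi.single i 1 : Fin m → ℂ) := by
    funext j
    by_cases h : j = i
    · subst h; simp
    · simp [Pi.single_apply, h]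
  unfold eulerOpFun
  rw [hcomp.fderiv, ContinuousLinearMap.coe_comp', Function.comp_apply, hsingle, map_smul]
  have hXi := hX i
  field_simp
  have hone : X i ^ 2 * (X i)⁻¹ ^ 2 = 1 := by rw [← mul_pow, mul_inv_cancel₀ hXi, one_pow]
  linear_combination (-(fderiv ℂ u fun j => 1 / X j) (Pi.single i 1)) * hone

lemma eulerOpFun_analyticAt {m : ℕ} (i : Fin m) {u : (Fin m → ℂ) → ℂ} {x : Fin m → ℂ}
    (h : AnalyticAt ℂ u x) : AnalyticAt ℂ (eulerOpFun i u) x := by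
  unfold eulerOpFun
  apply AnalyticAt.mul
  · exact (ContinuousLinearMap.proj i : (Fin m → ℂ) →L[ℂ] ℂ).analyticAt x
  · exact ((ContinuousLinearMap.apply ℂ ℂ (Pi.single i 1)).analyticAt _).comp h.fderiv

theorem pA_eq_neg_X_mul_ellA {m : ℕ} (hm : 1 ≤ m) (a : ℂ) (b c : Fin m → ℂ)
    (V : Set (Fin m → ℂ)) (hVopen : IsOpen V) (hV : ∀ X ∈ V, ∀ i, X i ≠ 0)
    (u : (Fin m → ℂ) → ℂ)
    (hu : AnalyticOnNhd ℂ u ((fun X : Fin m → ℂ => fun j => (X j)⁻¹) '' V))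
    (i : Fin m) (X : Fin m → ℂ) (hX : X ∈ V) :
    pAFun a b c i (u ∘ fun X : Fin m → ℂ => fun j => (X j)⁻¹) X =
      -X i * ellAFun a b c i u (fun j => (X j)⁻¹) := by
  have hXne : ∀ j, X j ≠ 0 := hV X hX
  have huy : AnalyticAt ℂ u (fun j => (X j)⁻¹) := hu _ ⟨X, hX, rfl⟩
  -- the two relevant auxiliary functions
  set g : (Fin m → ℂ) → ℂ := eulerOpFun i u + (c i - 1) • u with hg_def
  set w : (Fin m → ℂ) → ℂ := eulerOpFun i u + b i • u with hw_def
  have hg_an : AnalyticAt ℂ g (fun j => (X j)⁻¹) := by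
    apply (eulerOpFun_analyticAt i huy).add
    exact (analyticAt_const.mul huy : AnalyticAt ℂ (fun y => (c i - 1) * u y) _)
  have hw_an : AnalyticAt ℂ w (fun j => (X j)⁻¹) := by
    apply (eulerOpFun_analyticAt i huy).add
    exact (analyticAt_const.mul huy : AnalyticAt ℂ (fun y => b i * u y) _)
  -- eventual facts near X
  have hT : ∀ᶠ Y in nhds X, ∀ j, Y j ≠ 0 := by
    have hopen : IsOpen {Y : Fin m → ℂ | ∀ j, Y j ≠ 0} := by
      have : {Y : Fin m → ℂ | ∀ j, Y j ≠ 0} = ⋂ j, (fun Y : Fin m → ℂ => Y j) ⁻¹' {0}ᶜ := by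
        ext Y; simp
      rw [this]
      exact isOpen_iInter_of_finite fun j =>
        isOpen_compl_singleton.preimage (continuous_apply j)
    exact Filter.eventually_of_mem (hopen.mem_nhds hXne) fun Y hY => hY
  have hA : ∀ᶠ Y in nhds X, AnalyticAt ℂ u (fun j => (Y j)⁻¹) := by
    have hc : ContinuousAt (fun Y : Fin m → ℂ => fun j => (Y j)⁻¹) X :=
      continuousAt_pi.2 fun j => ((continuous_apply j).continuousAt).inv₀ (hXne j)
    exact hc.eventually huy.eventually_analyticAt
  set v : (Fin m → ℂ) → ℂ := u ∘ fun Y : Fin m → ℂ => fun j => (Y j)⁻¹ with hv_def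
  -- eventual equalities
  have hF1 : ((c i - 1) • v - eulerOpFun i v)
      =ᶠ[nhds X] (g ∘ fun Y : Fin m → ℂ => fun j => (Y j)⁻¹) := by
    filter_upwards [hT, hA] with Y h1 h2
    have hflip := eulerOpFun_flip i u Y h1 h2.differentiableAt
    simp only [hv_def, hg_def, Pi.sub_apply, Pi.smul_apply, Pi.add_apply,
      Function.comp_apply, smul_eq_mul, hflip]
    ring
  have hF2 : (eulerOpFun i v - b i • v)
      =ᶠ[nhds X] (fun Y => -(w (fun j => (Y j)⁻¹))) := by
    filter_upwards [hT, hA] with Y h1 h2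
    have hflip := eulerOpFun_flip i u Y h1 h2.differentiableAt
    simp only [hv_def, hw_def, Pi.sub_apply, Pi.smul_apply, Pi.add_apply,
      Function.comp_apply, smul_eq_mul, hflip]
    ring
  -- evaluate the first piece
  have hE1 : eulerOpFun i ((c i - 1) • v - eulerOpFun i v) X
      = - eulerOpFun i g (fun j => (X j)⁻¹) := by
    rw [eulerOpFun_congr i hF1]
    exact eulerOpFun_flip i g X hXne hg_an.differentiableAt
  -- evaluate the sum pieces
  have hE2 : ∀ j, eulerOpFun j (eulerOpFun i v - b i • v) X
      = eulerOpFun j w (fun j => (X j)⁻¹) := by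
    intro j
    rw [eulerOpFun_congr j hF2]
    have hneg : eulerOpFun j (fun Y : Fin m → ℂ => -(w (fun k => (Y k)⁻¹))) X
        = - eulerOpFun j (w ∘ fun Y : Fin m → ℂ => fun k => (Y k)⁻¹) X := by
      unfold eulerOpFun
      rw [show (fun Y : Fin m → ℂ => -(w (fun k => (Y k)⁻¹)))
          = (fun Y : Fin m → ℂ => -((w ∘ fun Y : Fin m → ℂ => fun k => (Y k)⁻¹) Y)) from rfl,
        fderiv_fun_neg]
      simp [mul_comm]
    rw [hneg, eulerOpFun_flip j w X hXne hw_an.differentiableAt, neg_neg]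
  -- evaluate the zeroth-order piece
  have hF2X : (eulerOpFun i v - b i • v) X = -(w (fun j => (X j)⁻¹)) := hF2.self_of_nhds
  -- now compute
  have hXi := hXne i
  simp only [pAFun, ellAFun, Pi.add_apply, Pi.sub_apply, Pi.smul_apply, smul_eq_mul,
    Finset.sum_apply, hE1, hF2X]
  rw [Finset.sum_congr rfl fun j _ => hE2 j]
  simp only [hg_def, hw_def]
  field_simp
  simp only [Pi.add_apply, Pi.smul_apply, smul_eq_mul]
  ring
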